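/- Let d, m ≥ 1 and n = dm. For every element η ∈ ℤ/dℤ of order exactly d and every m-cycle w_m ∈ S_m, the element (w_m, 1, …, 1)·η of G = (S_m)^d ⋊ ℤ/dℤ has no nonzero fixed vector in V, i.e. it is elliptic. -/

import Mathlib

/-- The wreath product `(S_m)^d ⋊ ℤ/dℤ`, realized concretely as the subgroup of permutations
of the `n = d·m` coordinates (indexed by pairs `(i,j)` with `i : ZMod d` the block index and
`j : Fin m` the position within the block) that shift the block index by a constant amount. -/
def wrG (d m : ℕ) : Subgroup (Equiv.Perm (ZMod d × Fin m)) where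
  carrier := {π | ∃ a : ZMod d, ∀ p : ZMod d × Fin m, (π p).1 = p.1 + a}
  one_mem' := ⟨0, fun p => by simp⟩
  mul_mem' := by
    rintro π σ ⟨a, ha⟩ ⟨b, hb⟩
    refine ⟨b + a, fun p => ?_⟩
    have : (π * σ) p = π (σ p) := rfl
    rw [this, ha, hb, add_assoc]
  inv_mem' := by
    rintro π ⟨a, ha⟩
    refine ⟨-a, fun p => ?_⟩
    have h1 := ha (π⁻¹ p)
    rw [show π (π⁻¹ p) = p from π.apply_symm_apply p] at h1
    rw [h1, add_neg_cancel_right]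

/-- The element `(σ_1, …, σ_d)·ξ^a` of the wreath product `(S_m)^d ⋊ ℤ/dℤ` (here with blocks
indexed by `ZMod d`): it sends the coordinate `(i, j)` to `(i + a, σ_{i+a} j)`, i.e. first `ξ^a`
shifts every block up by `a`, and then `σ_k` permutes the coordinates within the `k`-th block. -/
def wrElt (d m : ℕ) (σ : ZMod d → Equiv.Perm (Fin m)) (a : ZMod d) :
    Equiv.Perm (ZMod d × Fin m) where
  toFun p := (p.1 + a, σ (p.1 + a) p.2)
  invFun p := (p.1 - a, (σ p.1)⁻¹ p.2)
  left_inv p := by simp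
  right_inv p := by simp

/-- An element `g` of the wreath product is elliptic if it has no nonzero fixed vector in
`V = {x ∈ ℂ^n : x_1 + ⋯ + x_n = 0}` (the action being by permutation of coordinates). -/
def IsElliptic (d m : ℕ) [NeZero d] (g : Equiv.Perm (ZMod d × Fin m)) : Prop :=
  ∀ v : ZMod d × Fin m → ℂ,
    (∑ p : ZMod d × Fin m, v p = 0) → (∀ p, v (g p) = v p) → v = 0

/-- Let `d, m ≥ 1` and `n = dm`.  For every element `η ∈ ℤ/dℤ` of order
exactly `d` and every `m`-cycle `w_m ∈ S_m` (expressed by the condition that the cyclic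
group generated by `w_m` acts transitively on the `m` letters), the element
`(w_m, 1, …, 1)·η` of `G = (S_m)^d ⋊ ℤ/dℤ` has no nonzero fixed vector in `V`,
i.e. it is elliptic. -/
theorem stmt14 (d m : ℕ) [NeZero d] (hd : 1 ≤ d) (hm : 1 ≤ m)
    (wm : Equiv.Perm (Fin m)) (hwm : ∀ a b : Fin m, ∃ k : ℕ, (wm ^ k) a = b)
    (η : ZMod d) (hη : addOrderOf η = d) :
    wrElt d m (fun i => if i = 0 then wm else 1) η ∈ wrG d m ∧
    IsElliptic d m (wrElt d m (fun i => if i = 0 then wm else 1) η) := by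
  have hcard : Fintype.card (ZMod d) = d := ZMod.card d
  have hsurj : ∀ i : ZMod d, ∃ k : ℕ, k < d ∧ k • η = i := by
    have hinj : Function.Injective (fun k : Fin d => (k.1 • η : ZMod d)) := by
      intro k l h
      simp only at h
      wlog hkl : l.1 ≤ k.1 generalizing k l
      · exact (this h.symm (le_of_not_ge hkl)).symm
      have h2 : (k.1 - l.1) • η = 0 := by
        have h3 := add_nsmul η l.1 (k.1 - l.1)
        rw [Nat.add_sub_cancel' hkl, h] at h3
        have := add_left_cancel (a := l.1 • η) (b := (k.1 - l.1) • η) (c := 0)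
        exact this (by rw [add_zero, ← h3])
      rw [← addOrderOf_dvd_iff_nsmul_eq_zero, hη] at h2
      rcases Nat.eq_zero_or_pos (k.1 - l.1) with h0 | h0
      · exact Fin.ext (by omega)
      · exact absurd (Nat.le_of_dvd h0 h2) (by omega)
    have hbij : Function.Bijective (fun k : Fin d => (k.1 • η : ZMod d)) := by
      rw [Fintype.bijective_iff_injective_and_card]
      exact ⟨hinj, by simp [hcard]⟩
    intro i
    obtain ⟨k, hk⟩ := hbij.2 i
    exact ⟨k.1, k.2, hk⟩
  refine ⟨⟨η, fun p => rfl⟩, ?_⟩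
  intro v hsum hfix
  have hstep : ∀ (i : ZMod d) (j : Fin m),
      v (i + η, (if i + η = 0 then wm else 1) j) = v (i, j) := by
    intro i j
    exact hfix (i, j)
  have key1 : ∀ k : ℕ, k < d → ∀ j, v ((k • η : ZMod d), j) = v (0, j) := by
    intro k
    induction k with
    | zero => intro _ j; simp
    | succ k ih =>
      intro hk j
      have hne : (((k + 1) • η : ZMod d)) ≠ 0 := by
        intro h0
        rw [← addOrderOf_dvd_iff_nsmul_eq_zero, hη] at h0
        exact absurd (Nat.le_of_dvd (by omega) h0) (by omega)
      have hs := hstep (k • η) j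
      rw [show (k • η : ZMod d) + η = (k + 1) • η from (succ_nsmul η k).symm,
        if_neg hne] at hs
      simpa using hs.trans (ih (by omega) j)
  have hd1 : (((d - 1) • η : ZMod d)) + η = 0 := by
    rw [show ((d - 1) • η : ZMod d) + η = (d - 1 + 1) • η from (succ_nsmul η (d - 1)).symm,
      show d - 1 + 1 = d by omega]
    simp [hη, addOrderOf_nsmul_eq_zero]
  have key2 : ∀ j, v ((0 : ZMod d), wm j) = v (0, j) := by
    intro j
    have hs := hstep ((d - 1) • η) j
    rw [hd1, if_pos rfl] at hs
    exact hs.trans (key1 (d - 1) (by omega) j)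
  have key3 : ∀ (k : ℕ) (j : Fin m), v ((0 : ZMod d), (wm ^ k) j) = v (0, j) := by
    intro k
    induction k with
    | zero => intro j; simp
    | succ k ih =>
      intro j
      rw [pow_succ]
      simpa using (ih (wm j)).trans (key2 j)
  set j0 : Fin m := ⟨0, hm⟩ with hj0
  have hconst : ∀ p : ZMod d × Fin m, v p = v (0, j0) := by
    rintro ⟨i, j⟩
    obtain ⟨k, hk, hki⟩ := hsurj i
    obtain ⟨t, ht⟩ := hwm j0 j
    rw [← hki, key1 k hk j, ← ht, key3]
  rw [Finset.sum_congr rfl (fun p _ => hconst p), Finset.sum_const, Finset.card_univ,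
    nsmul_eq_mul] at hsum
  have hc0 : v (0, j0) = 0 := by
    rcases mul_eq_zero.mp hsum with h | h
    · exfalso
      rw [Nat.cast_eq_zero] at h
      rw [Fintype.card_prod, hcard, Fintype.card_fin] at h
      exact absurd h (by positivity)
    · exact h
  exact funext fun p => (hconst p).trans hc0
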